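/- Let a ≤ b be integers. Then the digital interval ([a,b]_ℤ, c₁) has the approximate fixed point property: for every function f : [a,b]_ℤ → [a,b]_ℤ such that |s − t| = 1 implies |f(s) − f(t)| ≤ 1, there exists t ∈ [a,b]_ℤ with |f(t) − t| ≤ 1. -/

import Mathlib

/-- A function `f : X → Y` is `(κ,λ)`-continuous between digital images. -/
def DigContinuous {X Y : Type*} (kappa : X → X → Prop) (lam : Y → Y → Prop)
    (f : X → Y) : Prop :=
  ∀ x x', kappa x x' → f x = f x' ∨ lam (f x) (f x')

/-- `(X,κ)` has the approximate fixed point property. -/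
def HasAFPP {X : Type*} (kappa : X → X → Prop) : Prop :=
  ∀ f : X → X, DigContinuous kappa kappa f → ∃ x, f x = x ∨ kappa (f x) x

/-- The normal product adjacency `NP(κ,λ)` on `X × Y`. -/
def NP {X Y : Type*} (kappa : X → X → Prop) (lam : Y → Y → Prop)
    (p q : X × Y) : Prop :=
  p ≠ q ∧ (kappa p.1 q.1 ∨ p.1 = q.1) ∧ (lam p.2 q.2 ∨ p.2 = q.2)

/-- The `c_u`-adjacency on `ℤ^n`. -/
def cAdj (u : ℕ) {n : ℕ} (x y : Fin n → ℤ) : Prop :=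
  x ≠ y ∧ (∀ i, |x i - y i| ≤ 1) ∧
    (Finset.univ.filter (fun i => x i ≠ y i)).card ≤ u

/-- The digital interval `([a,b]_ℤ, c₁)` has the AFPP. -/
theorem afpp_interval (a b : ℤ) (hab : a ≤ b)
    (f : Set.Icc a b → Set.Icc a b)
    (hf : ∀ s t : Set.Icc a b, |(s : ℤ) - (t : ℤ)| = 1 → |(f s : ℤ) - (f t : ℤ)| ≤ 1) :
    ∃ t : Set.Icc a b, |(f t : ℤ) - (t : ℤ)| ≤ 1 := by
  set N : ℕ := (b - a).toNat with hN
  have hmem : ∀ n : ℕ, a + (min n N : ℕ) ∈ Set.Icc a b := by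
    intro n
    constructor
    · linarith [Int.ofNat_nonneg (min n N)]
    · have h1 : ((min n N : ℕ) : ℤ) ≤ (N : ℤ) := by
        exact_mod_cast Nat.min_le_right n N
      have h2 : (N : ℤ) = b - a := Int.toNat_of_nonneg (by linarith)
      linarith
  set pt : ℕ → Set.Icc a b := fun n => ⟨a + (min n N : ℕ), hmem n⟩ with hpt
  have hQN : (f (pt N) : ℤ) - (pt N : ℤ) ≤ 1 := by
    have hle : ((f (pt N) : ℤ)) ≤ b := (f (pt N)).2.2
    have hval : ((pt N : ℤ)) = b := by
      simp only [hpt, min_self]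
      have h2 : (N : ℤ) = b - a := Int.toNat_of_nonneg (by linarith)
      simp [h2]
    rw [hval]; linarith
  have hQ : ∃ n, (f (pt n) : ℤ) - (pt n : ℤ) ≤ 1 := ⟨N, hQN⟩
  classical
  set n := Nat.find hQ with hn
  have hQn : (f (pt n) : ℤ) - (pt n : ℤ) ≤ 1 := Nat.find_spec hQ
  have hnN : n ≤ N := Nat.find_min' hQ hQN
  rcases Nat.eq_zero_or_pos n with h0 | hpos
  · -- pt 0 = a, and f(a) ≥ a
    refine ⟨pt n, ?_⟩
    have hval : ((pt n : ℤ)) = a := by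
      simp [hpt, h0]
    have hge : a ≤ ((f (pt n) : ℤ)) := (f (pt n)).2.1
    rw [abs_le]; constructor <;> [linarith; linarith]
  · obtain ⟨k, hk⟩ : ∃ k, n = k + 1 := ⟨n - 1, (Nat.succ_pred_eq_of_pos hpos).symm⟩
    have hkN : k < N := by omega
    have hknot : ¬ ((f (pt k) : ℤ) - (pt k : ℤ) ≤ 1) := Nat.find_min hQ (by omega)
    push_neg at hknot
    have hvk : ((pt k : ℤ)) = a + k := by
      simp [hpt, Nat.min_eq_left (le_of_lt hkN), le_of_lt hkN]
    have hvk1 : ((pt n : ℤ)) = a + k + 1 := by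
      show a + ((min n N : ℕ) : ℤ) = a + k + 1
      rw [Nat.min_eq_left hnN, hk]
      push_cast
      ring
    have hadj : |((pt k : ℤ)) - ((pt n : ℤ))| = 1 := by
      rw [hvk, hvk1]; simp
    have hdiff : |(f (pt k) : ℤ) - (f (pt n) : ℤ)| ≤ 1 := hf _ _ hadj
    rw [abs_le] at hdiff
    refine ⟨pt n, ?_⟩
    rw [abs_le]
    constructor
    · rw [hvk1]; rw [hvk] at hknot; linarith [hdiff.1]
    · exact hQn
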